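/- Let p be a prime with p ≡ 3 (mod 4) and let d ∈ F_p with d ≠ 0 and d ≠ 1. Then N_d = p + 1 when χ(d) = −1 (respectively N_d = p − 3 when χ(d) = 1) if and only if the supersingularity condition Σ_{j=0}^{(p−1)/2} binom((p−1)/2, j)² · d^j = 0 holds in F_p. Equivalently: N_d = p − 1 − 2·χ(d) ⟺ Σ_{j=0}^{(p−1)/2} binom((p−1)/2, j)² · d^j = 0 in F_p. -/

import Mathlib

open Finset

lemma sum_pow_zmod (p : ℕ) [Fact p.Prime] (n : ℕ) :
    ∑ x : ZMod p, x ^ n = if n ≠ 0 ∧ (p - 1) ∣ n then -1 else 0 := by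
  classical
  rcases eq_or_ne n 0 with rfl | hn
  · simp only [pow_zero, Finset.sum_const, Finset.card_univ, ZMod.card, nsmul_eq_mul, mul_one,
      ZMod.natCast_self]
    simp
  · have h0 : (0 : ZMod p) ^ n = 0 := zero_pow hn
    let φ : (ZMod p)ˣ ↪ ZMod p := ⟨fun x => x, Units.val_injective⟩
    have hmap : univ.map φ = univ \ {0} := by
      ext x
      simpa only [mem_map, mem_univ, Function.Embedding.coeFn_mk, true_and, mem_sdiff,
        mem_singleton, φ] using
          (show (∃ a : (ZMod p)ˣ, (a : ZMod p) = x) ↔ ¬x = 0 from isUnit_iff_ne_zero)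
    have h1 : ∑ x : ZMod p, x ^ n = ∑ x : (ZMod p)ˣ, (x : ZMod p) ^ n := by
      rw [show (∑ x : (ZMod p)ˣ, (x : ZMod p) ^ n) = ∑ x ∈ univ.map φ, x ^ n from
        (Finset.sum_map univ φ (fun x => x ^ n)).symm, hmap,
        Finset.sum_sdiff_eq_sub (Finset.singleton_subset_iff.mpr (mem_univ 0)),
        Finset.sum_singleton, h0, sub_zero]
    rw [h1, FiniteField.sum_pow_units]
    have : Fintype.card (ZMod p) = p := ZMod.card p
    rw [this]
    simp [hn]

lemma legendre_eq (p : ℕ) [Fact p.Prime] (a : ZMod p) :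
    legendreSym p (a.val : ℤ) = quadraticChar (ZMod p) a := by
  have : ((a.val : ℤ) : ZMod p) = a := by
    push_cast
    simp [ZMod.natCast_val, ZMod.cast_id]
  rw [legendreSym, this]

lemma char_cast (p : ℕ) [Fact p.Prime] (a : ZMod p) :
    ((quadraticChar (ZMod p) a : ℤ) : ZMod p) = a ^ (p / 2) := by
  have h := legendreSym.eq_pow p (a.val : ℤ)
  rw [legendre_eq] at h
  rw [h]
  congr 1
  push_cast
  simp [ZMod.natCast_val, ZMod.cast_id]


/-- The number of affine points of the Edwards curve `x² + y² = 1 + d x² y²` over `ZMod p`. -/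
noncomputable def edwardsCard (p : ℕ) (d : ZMod p) : ℕ :=
  Nat.card {xy : ZMod p × ZMod p // xy.1 ^ 2 + xy.2 ^ 2 = 1 + d * xy.1 ^ 2 * xy.2 ^ 2}

lemma count_eq (p : ℕ) [Fact p.Prime] (hp2 : p ≠ 2) (d : ZMod p) (hd0 : d ≠ 0) (hd1 : d ≠ 1) :
    (edwardsCard p d : ℤ) =
      (p : ℤ) - 1 - quadraticChar (ZMod p) d
        + ∑ x : ZMod p, quadraticChar (ZMod p) ((1 - x ^ 2) * (1 - d * x ^ 2)) := by
  classical
  have hchar : ringChar (ZMod p) ≠ 2 := by rw [ZMod.ringChar_zmod_n]; exact hp2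
  -- fiberwise count
  have e1 : edwardsCard p d
      = ∑ x : ZMod p, Fintype.card {y : ZMod p // x ^ 2 + y ^ 2 = 1 + d * x ^ 2 * y ^ 2} := by
    rw [edwardsCard, Nat.card_eq_fintype_card, Fintype.card_congr
      (Equiv.subtypeProdEquivSigmaSubtype fun x y : ZMod p =>
        x ^ 2 + y ^ 2 = 1 + d * x ^ 2 * y ^ 2), Fintype.card_sigma]
  -- per-fiber count
  have e2 : ∀ x : ZMod p,
      (Fintype.card {y : ZMod p // x ^ 2 + y ^ 2 = 1 + d * x ^ 2 * y ^ 2} : ℤ)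
        = if 1 - d * x ^ 2 = 0 then 0
          else quadraticChar (ZMod p) ((1 - x ^ 2) * (1 - d * x ^ 2)) + 1 := by
    intro x
    by_cases hc : 1 - d * x ^ 2 = 0
    · rw [if_pos hc]
      norm_cast
      rw [Fintype.card_eq_zero_iff]
      constructor
      rintro ⟨y, hy⟩
      have hx2 : d * x ^ 2 = 1 := by linear_combination -hc
      have hx1 : x ^ 2 = 1 := by linear_combination hy + y ^ 2 * hx2
      have : d = 1 := by
        have := hx2
        rw [hx1, mul_one] at this
        exact this
      exact hd1 this
    · rw [if_neg hc]
      have key : ∀ y : ZMod p, (x ^ 2 + y ^ 2 = 1 + d * x ^ 2 * y ^ 2)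
          ↔ y ^ 2 = (1 - x ^ 2) * (1 - d * x ^ 2)⁻¹ := by
        intro y
        rw [eq_mul_inv_iff_mul_eq₀ hc]
        constructor <;> intro h <;> linear_combination h
      have : Fintype.card {y : ZMod p // x ^ 2 + y ^ 2 = 1 + d * x ^ 2 * y ^ 2}
          = Fintype.card {y : ZMod p // y ^ 2 = (1 - x ^ 2) * (1 - d * x ^ 2)⁻¹} :=
        Fintype.card_congr (Equiv.subtypeEquivRight key)
      rw [this]
      have hsq := quadraticChar_card_sqrts hchar ((1 - x ^ 2) * (1 - d * x ^ 2)⁻¹)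
      have hcard : ((Fintype.card {y : ZMod p // y ^ 2 = (1 - x ^ 2) * (1 - d * x ^ 2)⁻¹}) : ℤ)
          = quadraticChar (ZMod p) ((1 - x ^ 2) * (1 - d * x ^ 2)⁻¹) + 1 := by
        rw [← hsq, Set.toFinset_card]
        norm_cast
      rw [hcard]
      have hinv : (1 - d * x ^ 2)⁻¹ ≠ 0 := inv_ne_zero hc
      have : quadraticChar (ZMod p) ((1 - x ^ 2) * (1 - d * x ^ 2)⁻¹)
          = quadraticChar (ZMod p) ((1 - x ^ 2) * (1 - d * x ^ 2)) := by
        rw [map_mul, map_mul]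
        congr 1
        rw [show (1 - d * x ^ 2)⁻¹ = (1 - d * x ^ 2) * ((1 - d * x ^ 2)⁻¹) ^ 2 by
          (field_simp), map_mul, quadraticChar_sq_one' hinv, mul_one]
      rw [this]
  have e3 : ((edwardsCard p d : ℕ) : ℤ)
      = ∑ x : ZMod p, (if 1 - d * x ^ 2 = 0 then (0 : ℤ)
          else quadraticChar (ZMod p) ((1 - x ^ 2) * (1 - d * x ^ 2)) + 1) := by
    rw [e1]
    push_cast
    exact Finset.sum_congr rfl fun x _ => e2 x
  have e4 : ∀ x : ZMod p,
      (if 1 - d * x ^ 2 = 0 then (0 : ℤ)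
          else quadraticChar (ZMod p) ((1 - x ^ 2) * (1 - d * x ^ 2)) + 1)
        = (quadraticChar (ZMod p) ((1 - x ^ 2) * (1 - d * x ^ 2)) + 1)
            - (if 1 - d * x ^ 2 = 0 then (1 : ℤ) else 0) := by
    intro x
    by_cases hc : 1 - d * x ^ 2 = 0
    · rw [if_pos hc, if_pos hc, hc, mul_zero, quadraticChar_zero]
      ring
    · rw [if_neg hc, if_neg hc]
      ring
  rw [e3, Finset.sum_congr rfl fun x _ => e4 x, Finset.sum_sub_distrib,
    Finset.sum_add_distrib, Finset.sum_const, Finset.card_univ, ZMod.card]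
  have hZ : (∑ x : ZMod p, if 1 - d * x ^ 2 = 0 then (1 : ℤ) else 0)
      = quadraticChar (ZMod p) d + 1 := by
    rw [Finset.sum_boole]
    have hfil : (univ.filter fun x : ZMod p => 1 - d * x ^ 2 = 0)
        = univ.filter fun x : ZMod p => x ^ 2 = d⁻¹ := by
      ext x
      simp only [mem_filter, mem_univ, true_and]
      constructor
      · intro h
        exact eq_inv_of_mul_eq_one_left (by linear_combination -h)
      · intro h
        rw [h]
        field_simp
        ring
    rw [hfil]
    have hsq := quadraticChar_card_sqrts hchar (d⁻¹ : ZMod p)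
    rw [Set.toFinset_setOf] at hsq
    rw [hsq]
    congr 1
    rw [show (d⁻¹ : ZMod p) = d * (d⁻¹) ^ 2 by (field_simp), map_mul,
      quadraticChar_sq_one' (inv_ne_zero hd0), mul_one]
  rw [hZ]
  push_cast
  ring


lemma Tsum (p : ℕ) [Fact p.Prime] (hp : p % 4 = 3) (d : ZMod p) :
    ∑ x : ZMod p, ((1 - x ^ 2) * (1 - d * x ^ 2)) ^ ((p - 1) / 2)
      = (∑ j ∈ range ((p - 1) / 2 + 1), (((p - 1) / 2).choose j : ZMod p) ^ 2 * d ^ j)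
        - d ^ ((p - 1) / 2) := by
  have hp3 : 3 ≤ p := by omega
  set m := (p - 1) / 2 with hm
  have hm1 : 1 ≤ m := by omega
  have h2m : p - 1 = 2 * m := by omega
  have hmodd : Odd m := Nat.odd_iff.mpr (by omega)
  set F : ℕ → ℕ → ZMod p :=
    fun j k => (-1) ^ (j + k) * d ^ k * (m.choose j) * (m.choose k) with hF
  have expand : ∀ x : ZMod p, ((1 - x ^ 2) * (1 - d * x ^ 2)) ^ m
      = ∑ j ∈ range (m + 1), ∑ k ∈ range (m + 1), F j k * x ^ (2 * (j + k)) := by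
    intro x
    rw [mul_pow, show (1 : ZMod p) - x ^ 2 = -x ^ 2 + 1 by ring,
      show (1 : ZMod p) - d * x ^ 2 = -(d * x ^ 2) + 1 by ring, add_pow, add_pow,
      Finset.sum_mul_sum]
    refine Finset.sum_congr rfl fun j _ => Finset.sum_congr rfl fun k _ => ?_
    rw [hF]
    simp only [one_pow, mul_one]
    rw [neg_pow, neg_pow]
    ring
  rw [Finset.sum_congr rfl fun x _ => expand x, Finset.sum_comm]
  rw [Finset.sum_congr rfl fun j _ => Finset.sum_comm]
  rw [Finset.sum_congr rfl fun j _ => Finset.sum_congr rfl fun k _ =>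
    (Finset.mul_sum _ _ _).symm]
  rw [Finset.sum_congr rfl fun j _ => Finset.sum_congr rfl fun k _ => by
    rw [sum_pow_zmod p (2 * (j + k))]]
  have key : ∀ j ∈ range (m + 1), ∀ k ∈ range (m + 1),
      F j k * (if 2 * (j + k) ≠ 0 ∧ (p - 1) ∣ 2 * (j + k) then (-1 : ZMod p) else 0)
        = (if k = m - j then -F j k else 0)
          + (if j = m then (if k = m then -F j k else 0) else 0) := by
    intro j hj k hk
    rw [mem_range] at hj hk
    have hdvd : ((p - 1) ∣ 2 * (j + k)) ↔ m ∣ (j + k) := by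
      rw [h2m]
      exact mul_dvd_mul_iff_left two_ne_zero
    by_cases hjk : j + k = m
    · have hc1 : 2 * (j + k) ≠ 0 ∧ (p - 1) ∣ 2 * (j + k) :=
        ⟨by omega, hdvd.mpr ⟨1, by rw [mul_one]; omega⟩⟩
      have h2 : (if j = m then (if k = m then -F j k else 0) else 0) = 0 := by
        by_cases hjm : j = m
        · rw [if_pos hjm, if_neg (by omega : ¬ k = m)]
        · rw [if_neg hjm]
      rw [if_pos (by omega : k = m - j), h2, if_pos hc1]
      ring
    · by_cases hjm : j = m
      · by_cases hkm : k = m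
        · have hc1 : 2 * (j + k) ≠ 0 ∧ (p - 1) ∣ 2 * (j + k) :=
            ⟨by omega, hdvd.mpr ⟨2, by omega⟩⟩
          rw [if_neg (by omega : ¬ k = m - j), if_pos hjm, if_pos hkm, if_pos hc1]
          ring
        · rw [if_neg (by omega : ¬ k = m - j), if_pos hjm, if_neg hkm, if_neg]
          · ring
          rintro ⟨h0, hdv⟩
          obtain ⟨t, ht⟩ := hdvd.mp hdv
          have ht0 : t ≠ 0 := by rintro rfl; omega
          have ht2 : t ≤ 2 := by
            by_contra hc
            push_neg at hc
            have h3 : m * 3 ≤ m * t := Nat.mul_le_mul_left m hc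
            omega
          interval_cases t <;> omega
      · rw [if_neg (by omega : ¬ k = m - j), if_neg hjm, if_neg]
        · ring
        rintro ⟨h0, hdv⟩
        obtain ⟨t, ht⟩ := hdvd.mp hdv
        have ht0 : t ≠ 0 := by rintro rfl; omega
        have ht2 : t ≤ 2 := by
          by_contra hc
          push_neg at hc
          have h3 : m * 3 ≤ m * t := Nat.mul_le_mul_left m hc
          omega
        interval_cases t <;> omega
  rw [Finset.sum_congr rfl fun j hj => Finset.sum_congr rfl fun k hk => key j hj k hk]
  rw [Finset.sum_congr rfl fun j _ => Finset.sum_add_distrib, Finset.sum_add_distrib]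
  have part1 : ∀ j ∈ range (m + 1),
      (∑ k ∈ range (m + 1), if k = m - j then -F j k else 0) = -F j (m - j) := by
    intro j hj
    rw [Finset.sum_ite_eq' (range (m + 1)) (m - j) (fun k => -F j k),
      if_pos (by rw [mem_range] at *; omega : m - j ∈ range (m + 1))]
  have part2 : (∑ j ∈ range (m + 1),
      if j = m then (∑ k ∈ range (m + 1), if k = m then -F j k else 0) else 0)
        = -F m m := by
    rw [Finset.sum_ite_eq' (range (m + 1)) m, if_pos (by simp),
      Finset.sum_ite_eq' (range (m + 1)) m, if_pos (by simp)]
  rw [Finset.sum_congr rfl part1,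
    Finset.sum_congr rfl (fun j _ => by
      rw [Finset.sum_ite_irrel, Finset.sum_const_zero] :
      ∀ j ∈ range (m + 1), (∑ k ∈ range (m + 1),
        if j = m then (if k = m then -F j k else 0) else 0)
        = if j = m then (∑ k ∈ range (m + 1), if k = m then -F j k else 0) else 0),
    part2]
  have e5 : ∀ j ∈ range (m + 1), -F j (m - j) = (m.choose j : ZMod p) ^ 2 * d ^ (m - j) := by
    intro j hj
    rw [mem_range] at hj
    rw [hF]
    simp only
    rw [show j + (m - j) = m by omega, Nat.choose_symm (by omega : j ≤ m),
      Odd.neg_one_pow hmodd]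
    ring
  have e6 : -F m m = -(d ^ m) := by
    rw [hF]
    simp only
    rw [Even.neg_one_pow ⟨m, rfl⟩, Nat.choose_self]
    push_cast
    ring
  rw [Finset.sum_congr rfl e5, e6]
  have e7 : (∑ j ∈ range (m + 1), (m.choose j : ZMod p) ^ 2 * d ^ (m - j))
      = ∑ j ∈ range (m + 1), (m.choose j : ZMod p) ^ 2 * d ^ j := by
    rw [← Finset.sum_range_reflect (fun j => (m.choose j : ZMod p) ^ 2 * d ^ j) (m + 1)]
    refine Finset.sum_congr rfl fun j hj => ?_
    rw [mem_range] at hj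
    simp only [Nat.add_sub_cancel]
    rw [Nat.choose_symm (by omega : j ≤ m)]
  rw [e7]
  ring


lemma T_bound (p : ℕ) [Fact p.Prime] (hp3 : 3 ≤ p) (d : ZMod p) :
    |∑ x : ZMod p, (quadraticChar (ZMod p) ((1 - x ^ 2) * (1 - d * x ^ 2)) : ℤ)|
      ≤ (p : ℤ) - 2 := by
  classical
  have hne : (1 : ZMod p) ≠ -1 := by
    have : Fact (2 < p) := ⟨by omega⟩
    exact fun h => ZMod.neg_one_ne_one h.symm
  have habs : ∀ a : ZMod p, |(quadraticChar (ZMod p) a : ℤ)| ≤ 1 := by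
    intro a
    rcases quadraticChar_isQuadratic (ZMod p) a with h | h | h <;> rw [h] <;> norm_num
  have hvanish : ∀ x ∈ (univ : Finset (ZMod p)), x ∉ (univ \ {1, -1} : Finset (ZMod p)) →
      (quadraticChar (ZMod p) ((1 - x ^ 2) * (1 - d * x ^ 2)) : ℤ) = 0 := by
    intro x _ hx
    simp only [mem_sdiff, mem_univ, true_and, not_not, mem_insert, mem_singleton] at hx
    have hx2 : x ^ 2 = 1 := by rcases hx with rfl | rfl <;> ring
    rw [hx2, sub_self, zero_mul, quadraticChar_zero]
  rw [← Finset.sum_subset (Finset.subset_univ (univ \ {1, -1})) hvanish]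
  calc |∑ x ∈ univ \ {1, -1},
        (quadraticChar (ZMod p) ((1 - x ^ 2) * (1 - d * x ^ 2)) : ℤ)|
      ≤ ∑ x ∈ univ \ {1, -1},
        |(quadraticChar (ZMod p) ((1 - x ^ 2) * (1 - d * x ^ 2)) : ℤ)| :=
        Finset.abs_sum_le_sum_abs _ _
    _ ≤ ∑ _x ∈ univ \ {1, -1}, (1 : ℤ) := Finset.sum_le_sum fun x _ => habs _
    _ = ((univ \ {1, -1} : Finset (ZMod p)).card : ℤ) := by
        rw [Finset.sum_const, nsmul_eq_mul, mul_one]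
    _ ≤ (p : ℤ) - 2 := by
        rw [Finset.card_sdiff_of_subset (Finset.subset_univ _), Finset.card_univ, ZMod.card]
        have h2 : ({1, -1} : Finset (ZMod p)).card = 2 := by
          rw [Finset.card_insert_of_notMem (by simpa using hne), Finset.card_singleton]
        rw [h2]
        push_cast [Nat.cast_sub (by omega : 2 ≤ p)]
        norm_num

theorem stmt2 (p : ℕ) [Fact p.Prime] (hp : p % 4 = 3) (d : ZMod p)
    (hd0 : d ≠ 0) (hd1 : d ≠ 1) :
    ((edwardsCard p d : ℤ) = (p : ℤ) - 1 - 2 * legendreSym p (d.val : ℤ)) ↔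
      ∑ j ∈ range ((p - 1) / 2 + 1),
        (((p - 1) / 2).choose j : ZMod p) ^ 2 * d ^ j = 0 := by
  have hp3 : 3 ≤ p := by omega
  set S : ZMod p := ∑ j ∈ range ((p - 1) / 2 + 1),
    (((p - 1) / 2).choose j : ZMod p) ^ 2 * d ^ j with hS
  set T : ℤ := ∑ x : ZMod p, (quadraticChar (ZMod p) ((1 - x ^ 2) * (1 - d * x ^ 2)) : ℤ)
    with hT
  have hcount := count_eq p (by omega) d hd0 hd1
  have hiff1 : ((edwardsCard p d : ℤ) = (p : ℤ) - 1 - 2 * legendreSym p (d.val : ℤ))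
      ↔ T = -(quadraticChar (ZMod p) d : ℤ) := by
    rw [legendre_eq p d, hcount, ← hT]
    constructor <;> intro h <;> linarith
  have hhalf : p / 2 = (p - 1) / 2 := by omega
  have hcast : ((T : ℤ) : ZMod p) = S - d ^ ((p - 1) / 2) := by
    rw [hT]
    push_cast
    rw [Finset.sum_congr rfl fun x _ => by
      rw [char_cast p ((1 - x ^ 2) * (1 - d * x ^ 2)), hhalf]]
    rw [Tsum p hp d, hS]
  have hchid : ((quadraticChar (ZMod p) d : ℤ) : ZMod p) = d ^ ((p - 1) / 2) := by
    rw [char_cast p d, hhalf]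
  rw [hiff1]
  constructor
  · intro h
    have h2 : ((-(quadraticChar (ZMod p) d : ℤ) : ℤ) : ZMod p) = S - d ^ ((p - 1) / 2) := by
      rw [← h, hcast]
    rw [Int.cast_neg, hchid] at h2
    linear_combination -h2
  · intro hSz
    have h2 : (((T + (quadraticChar (ZMod p) d : ℤ)) : ℤ) : ZMod p) = 0 := by
      push_cast
      rw [show ((T : ℤ) : ZMod p) = S - d ^ ((p - 1) / 2) from hcast, hchid, hSz]
      ring
    have hdvd : (p : ℤ) ∣ T + (quadraticChar (ZMod p) d : ℤ) :=
      (ZMod.intCast_zmod_eq_zero_iff_dvd _ p).mp h2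
    have hb1 : |T| ≤ (p : ℤ) - 2 := T_bound p hp3 d
    have hb2 : |(quadraticChar (ZMod p) d : ℤ)| ≤ 1 := by
      rcases quadraticChar_isQuadratic (ZMod p) d with h | h | h <;> rw [h] <;> norm_num
    have hlt : |T + (quadraticChar (ZMod p) d : ℤ)| < (p : ℤ) := by
      calc |T + _| ≤ |T| + |(quadraticChar (ZMod p) d : ℤ)| := abs_add_le _ _
        _ < (p : ℤ) := by omega
    have := Int.eq_zero_of_abs_lt_dvd hdvd hlt
    linarith
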